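/- arXiv:1502.01488 — 2 statements merged into one kernel-verified Lean document; each statement's English description precedes it below -/
import Mathlib

section
/- If Z_{x,h} follows the binomial kernel distribution B(x+1, (x+h)/(x+1)), then Var(Z_{x,h}) = (x+h)(1−h)/(x+1), which tends to x/(x+1) (not 0) as h → 0; hence the binomial kernel does not satisfy the vanishing-covariance condition of associated kernels at targets x ≥ 1. -/
/-- The binomial kernel distribution `B(x+1, (x+h)/(x+1))` has variance
`(x+h)(1−h)/(x+1)`, which tends to `x/(x+1)` (nonzero for `x ≥ 1`) as `h → 0`;
hence the binomial kernel does not satisfy the vanishing-variance condition. -/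
theorem binomial_kernel_variance (x : ℕ) :
    (∀ h : ℝ, 0 < h → h ≤ 1 →
      ∑ u ∈ Finset.range (x + 2), ((u : ℝ) - ((x : ℝ) + h)) ^ 2 *
        (((x + 1).choose u : ℝ) * (((x : ℝ) + h) / ((x : ℝ) + 1)) ^ u *
          ((1 - h) / ((x : ℝ) + 1)) ^ (x + 1 - u))
        = ((x : ℝ) + h) * (1 - h) / ((x : ℝ) + 1)) ∧
    Filter.Tendsto (fun h : ℝ => ((x : ℝ) + h) * (1 - h) / ((x : ℝ) + 1))
      (nhdsWithin 0 (Set.Ioi 0)) (nhds ((x : ℝ) / ((x : ℝ) + 1))) ∧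
    (1 ≤ x → (x : ℝ) / ((x : ℝ) + 1) ≠ 0) := by
  have hx1 : ((x : ℝ) + 1) ≠ 0 := by positivity
  refine ⟨?_, ?_, ?_⟩
  · intro h h0 h1
    set p : ℝ := ((x : ℝ) + h) / ((x : ℝ) + 1) with hp
    have hnp : ((x : ℝ) + 1) * p = (x : ℝ) + h := by rw [hp]; field_simp
    have hq : (1 - h) / ((x : ℝ) + 1) = 1 - p := by
      rw [hp]; field_simp; ring
    have key := congrArg (Polynomial.eval p) (bernsteinPolynomial.variance ℝ (x + 1))
    simp only [Polynomial.eval_finset_sum, Polynomial.eval_mul, Polynomial.eval_pow,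
      Polynomial.eval_sub, Polynomial.eval_smul, Polynomial.eval_X, Polynomial.eval_natCast,
      Polynomial.eval_one, bernsteinPolynomial, Polynomial.eval_pow, nsmul_eq_mul]
      at key
    have : ∑ u ∈ Finset.range (x + 2), ((u : ℝ) - ((x : ℝ) + h)) ^ 2 *
        (((x + 1).choose u : ℝ) * p ^ u * (1 - p) ^ (x + 1 - u))
        = ((x : ℝ) + 1) * p * (1 - p) := by
      push_cast at key
      rw [← key]
      refine Finset.sum_congr rfl fun u _ => ?_
      rw [show ((x : ℝ) + h) = ((x : ℝ) + 1) * p from hnp.symm]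
      ring
    rw [hq, this, hnp]
    rw [← hq] ; ring
  · have hc : Continuous (fun h : ℝ => ((x : ℝ) + h) * (1 - h) / ((x : ℝ) + 1)) := by
      fun_prop
    have := (hc.tendsto 0).mono_left (nhdsWithin_le_nhds (s := Set.Ioi (0:ℝ)))
    simpa using this
  · intro hx
    have hx' : (1 : ℝ) ≤ (x : ℝ) := by exact_mod_cast hx
    exact div_ne_zero (by linarith) hx1
end

section
/- If Z_{x,h;a} has the discrete triangular kernel distribution, then Var(Z_{x,h;a}) = (1/P(a,h)) Σ_{u=-a}^{a} u^2((a+1)^h − |u|^h), and this variance tends to 0 as h → 0+ (for fixed a ≥ 1), so the discrete triangular kernel satisfies the associated kernel conditions. -/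
/-- Normalizing constant of the discrete triangular kernel. -/
noncomputable def dtNorm (a : ℕ) (h : ℝ) : ℝ :=
  (2 * (a : ℝ) + 1) * ((a : ℝ) + 1) ^ h - 2 * ∑ k ∈ Finset.Icc 1 a, (k : ℝ) ^ h

/-- The discrete triangular kernel at target `x` with arm `a` and bandwidth `h`. -/
noncomputable def dtKernel (a : ℕ) (x : ℤ) (h : ℝ) (u : ℤ) : ℝ :=
  if u ∈ Finset.Icc (x - (a : ℤ)) (x + (a : ℤ)) then
    (((a : ℝ) + 1) ^ h - |(u : ℝ) - (x : ℝ)| ^ h) / dtNorm a h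
  else 0

lemma dtNorm_tendsto (a : ℕ) :
    Filter.Tendsto (fun h : ℝ => dtNorm a h) (nhds 0) (nhds 1) := by
  have h1 : Filter.Tendsto (fun h : ℝ => ((a : ℝ) + 1) ^ h) (nhds 0) (nhds 1) := by
    have := Real.continuousAt_const_rpow (a := (a : ℝ) + 1) (b := (0 : ℝ))
      (by positivity)
    simpa [ContinuousAt, Real.rpow_zero] using this
  have h2 : Filter.Tendsto (fun h : ℝ => ∑ k ∈ Finset.Icc 1 a, (k : ℝ) ^ h) (nhds 0)
      (nhds (a : ℝ)) := by
    have : Filter.Tendsto (fun h : ℝ => ∑ k ∈ Finset.Icc 1 a, (k : ℝ) ^ h) (nhds 0)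
        (nhds (∑ k ∈ Finset.Icc 1 a, (1 : ℝ))) := by
      refine tendsto_finset_sum _ fun k hk => ?_
      have hk0 : (k : ℝ) ≠ 0 := by
        have := (Finset.mem_Icc.mp hk).1
        positivity
      have := Real.continuousAt_const_rpow (a := (k : ℝ)) (b := (0 : ℝ)) hk0
      simpa [ContinuousAt, Real.rpow_zero] using this
    simpa [Finset.sum_const, Nat.card_Icc] using this
  have := (Filter.Tendsto.const_mul (2 * (a : ℝ) + 1) h1).sub
    (Filter.Tendsto.const_mul 2 h2)
  have heq : (2 * (a : ℝ) + 1) * 1 - 2 * (a : ℝ) = 1 := by ring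
  rw [heq] at this
  exact this

/-- The variance of the discrete triangular kernel equals
`(1/P(a,h)) Σ_{u=-a}^{a} u² ((a+1)^h − |u|^h)` and tends to `0` as `h → 0⁺`,
so the discrete triangular kernel satisfies the associated kernel conditions. -/
theorem discrete_triangular_variance (a : ℕ) (x : ℤ) (ha : 1 ≤ a) :
    (∀ h : ℝ, 0 < h →
      ∑ u ∈ Finset.Icc (x - (a : ℤ)) (x + (a : ℤ)),
          ((u : ℝ) - (x : ℝ)) ^ 2 * dtKernel a x h u
        = (1 / dtNorm a h) *
            ∑ u ∈ Finset.Icc (-(a : ℤ)) (a : ℤ), (u : ℝ) ^ 2 * (((a : ℝ) + 1) ^ h - |(u : ℝ)| ^ h)) ∧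
    Filter.Tendsto
      (fun h : ℝ => (1 / dtNorm a h) *
        ∑ u ∈ Finset.Icc (-(a : ℤ)) (a : ℤ), (u : ℝ) ^ 2 * (((a : ℝ) + 1) ^ h - |(u : ℝ)| ^ h))
      (nhdsWithin 0 (Set.Ioi 0)) (nhds 0) := by
  constructor
  · intro h hh
    rw [show x - (a : ℤ) = -(a : ℤ) + x by ring, show x + (a : ℤ) = (a : ℤ) + x by ring,
      ← Finset.map_add_right_Icc, Finset.sum_map, Finset.mul_sum]
    refine Finset.sum_congr rfl fun v hv => ?_
    obtain ⟨hv1, hv2⟩ := Finset.mem_Icc.mp hv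
    have hmem : v + x ∈ Finset.Icc (x - (a : ℤ)) (x + (a : ℤ)) :=
      Finset.mem_Icc.mpr ⟨by omega, by omega⟩
    simp only [addRightEmbedding, Function.Embedding.coeFn_mk, dtKernel, if_pos hmem]
    push_cast
    rw [show (v : ℝ) + (x : ℝ) - (x : ℝ) = (v : ℝ) from by ring]
    rw [if_pos hmem]
    ring
  · have T1 : Filter.Tendsto (fun h : ℝ => 1 / dtNorm a h) (nhdsWithin 0 (Set.Ioi 0))
        (nhds 1) := by
      have := ((dtNorm_tendsto a).inv₀ (by norm_num)).mono_left
        (nhdsWithin_le_nhds (s := Set.Ioi (0:ℝ)))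
      simpa [one_div] using this
    have T2 : Filter.Tendsto
        (fun h : ℝ => ∑ u ∈ Finset.Icc (-(a : ℤ)) (a : ℤ),
          (u : ℝ) ^ 2 * (((a : ℝ) + 1) ^ h - |(u : ℝ)| ^ h))
        (nhdsWithin 0 (Set.Ioi 0)) (nhds 0) := by
      have : Filter.Tendsto
          (fun h : ℝ => ∑ u ∈ Finset.Icc (-(a : ℤ)) (a : ℤ),
            (u : ℝ) ^ 2 * (((a : ℝ) + 1) ^ h - |(u : ℝ)| ^ h))
          (nhdsWithin 0 (Set.Ioi 0))
          (nhds (∑ u ∈ Finset.Icc (-(a : ℤ)) (a : ℤ), (0 : ℝ))) := by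
        refine tendsto_finset_sum _ fun u hu => ?_
        rcases eq_or_ne u 0 with rfl | hu0
        · simp
        · have hA : Filter.Tendsto (fun h : ℝ => ((a : ℝ) + 1) ^ h)
              (nhdsWithin 0 (Set.Ioi 0)) (nhds 1) := by
            have := Real.continuousAt_const_rpow (a := (a : ℝ) + 1) (b := (0 : ℝ))
              (by positivity)
            simpa [ContinuousAt, Real.rpow_zero] using this.mono_left nhdsWithin_le_nhds
          have hB : Filter.Tendsto (fun h : ℝ => |(u : ℝ)| ^ h)
              (nhdsWithin 0 (Set.Ioi 0)) (nhds 1) := by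
            have habs : |(u : ℝ)| ≠ 0 := by
              simp [abs_ne_zero, Int.cast_ne_zero, hu0]
            have := Real.continuousAt_const_rpow (a := |(u : ℝ)|) (b := (0 : ℝ)) habs
            simpa [ContinuousAt, Real.rpow_zero] using this.mono_left nhdsWithin_le_nhds
          have := (hA.sub hB).const_mul ((u : ℝ) ^ 2)
          simpa using this
      simpa using this
    have := T1.mul T2
    simpa using this
end
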